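/- Let φ : [0, ∞) → ℝ be strictly convex, twice continuously differentiable on (0, ∞), with φ(1) = 0, φ′(1) = 0 and φ″(1) > 0. Let f ∈ ℝⁿ be nonconstant and define the worst-case value V_φ(ε) := max{Σᵢ qᵢ fᵢ : q ∈ Δₙ, Σᵢ pᵢ φ(qᵢ/pᵢ) ≤ ε} for ε ≥ 0. Then lim_{ε ↓ 0} (V_φ(ε) − E_p(f)) / √ε = √(2 V_p(f) / φ″(1)). -/

import Mathlib

open Set Filter Finset
lemma min_at_one {a b : ℝ} (ha : a < 1) (hb : 1 < b) {h : ℝ → ℝ}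
    (hd : ∀ x ∈ Ioo a b, DifferentiableAt ℝ h x)
    (hd2 : ∀ x ∈ Ioo a b, DifferentiableAt ℝ (deriv h) x)
    (h2 : ∀ x ∈ Ioo a b, 0 ≤ deriv (deriv h) x)
    (h1 : deriv h 1 = 0) : ∀ t ∈ Ioo a b, h 1 ≤ h t := by
  have h1m : (1:ℝ) ∈ Ioo a b := ⟨ha, hb⟩
  have mono : MonotoneOn (deriv h) (Ioo a b) := by
    apply monotoneOn_of_deriv_nonneg (convex_Ioo a b)
    · exact fun x hx => ((hd2 x hx).continuousAt).continuousWithinAt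
    · rw [interior_Ioo]; exact fun x hx => (hd2 x hx).differentiableWithinAt
    · rw [interior_Ioo]; exact h2
  intro t ht
  rcases le_total t 1 with hct | hct
  · have : AntitoneOn h (Ioc a 1) := by
      apply antitoneOn_of_deriv_nonpos (convex_Ioc a 1)
      · exact fun x hx => (hd x ⟨hx.1, lt_of_le_of_lt hx.2 hb⟩).continuousAt.continuousWithinAt
      · rw [interior_Ioc]
        exact fun x hx => (hd x ⟨hx.1, hx.2.trans hb⟩).differentiableWithinAt
      · rw [interior_Ioc]
        intro x hx
        rw [← h1]
        exact mono ⟨hx.1, hx.2.trans hb⟩ h1m hx.2.le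
    exact this ⟨ht.1, hct⟩ ⟨ha, le_refl 1⟩ hct
  · have : MonotoneOn h (Ico 1 b) := by
      apply monotoneOn_of_deriv_nonneg (convex_Ico 1 b)
      · exact fun x hx => (hd x ⟨lt_of_lt_of_le ha hx.1, hx.2⟩).continuousAt.continuousWithinAt
      · rw [interior_Ico]
        exact fun x hx => (hd x ⟨ha.trans hx.1, hx.2⟩).differentiableWithinAt
      · rw [interior_Ico]
        intro x hx
        rw [← h1]
        exact mono h1m ⟨ha.trans hx.1, hx.2⟩ hx.1.le
    exact this ⟨le_refl 1, hb⟩ ⟨hct, ht.2⟩ hct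

lemma quad_deriv (c x : ℝ) : HasDerivAt (fun t : ℝ => c/2*(t-1)^2) (c*(x-1)) x := by
  have h : HasDerivAt (fun t : ℝ => c/2*(t-1)^2) _ x := (((hasDerivAt_id x).sub_const 1).pow 2).const_mul (c/2)
  convert h using 1
  simp [id]; ring

/-- generic tangent-line lower bound on a symmetric interval around 1 -/
lemma tangent_lb {r c : ℝ} (hr0 : 0 < r) (hr34 : r ≤ 3/4)
    (g g' g'' : ℝ → ℝ)
    (hdg : ∀ x ∈ Ioi (0:ℝ), HasDerivAt g (g' x) x)
    (hdg' : ∀ x ∈ Ioi (0:ℝ), HasDerivAt g' (g'' x) x)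
    (hg1 : g 1 = 0) (hg'1 : g' 1 = 0)
    (hc : ∀ x ∈ Ioo (1-r) (1+r), c ≤ g'' x) :
    ∀ t ∈ Ioo (1-r) (1+r), c/2 * (t-1)^2 ≤ g t := by
  have hop : IsOpen (Ioi (0:ℝ)) := isOpen_Ioi
  have h1mem : (1:ℝ) ∈ Ioi (0:ℝ) := by norm_num
  have hsub : Ioo (1-r) (1+r) ⊆ Ioi (0:ℝ) := fun x hx =>
    lt_of_lt_of_le (by linarith) hx.1.le
  set h : ℝ → ℝ := fun t => g t - c/2*(t-1)^2 with hh
  have hdh : ∀ x ∈ Ioi (0:ℝ), HasDerivAt h (g' x - c*(x-1)) x := fun x hx =>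
    (hdg x hx).sub (quad_deriv c x)
  have hdheq : ∀ x ∈ Ioi (0:ℝ), deriv h =ᶠ[nhds x] fun y => g' y - c*(y-1) := by
    intro x hx
    filter_upwards [hop.mem_nhds hx] with y hy
    exact (hdh y hy).deriv
  have hlin : ∀ x : ℝ, HasDerivAt (fun y : ℝ => c*(y-1)) c x := by
    intro x
    have := ((hasDerivAt_id x).sub_const 1).const_mul c
    simpa using this
  have hd2h : ∀ x ∈ Ioi (0:ℝ), HasDerivAt (deriv h) (g'' x - c) x := by
    intro x hx
    exact ((hdg' x hx).sub (hlin x)).congr_of_eventuallyEq (hdheq x hx)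
  have hmin : ∀ t ∈ Ioo (1-r) (1+r), h 1 ≤ h t := by
    apply min_at_one (by linarith) (by linarith)
    · exact fun x hx => (hdh x (hsub hx)).differentiableAt
    · exact fun x hx => (hd2h x (hsub hx)).differentiableAt
    · intro x hx
      rw [(hd2h x (hsub hx)).deriv]
      linarith [hc x hx]
    · rw [(hdh 1 h1mem).deriv, hg'1]; ring
  intro t ht
  have := hmin t ht
  simp only [hh, hg1] at this
  linarith

lemma sandwich (φ : ℝ → ℝ) (hφC2 : ContDiffOn ℝ 2 φ (Set.Ioi (0:ℝ)))
    (hφ1 : φ 1 = 0) (hφ'1 : deriv φ 1 = 0) {η : ℝ} (hη : 0 < η) :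
    ∃ δ : ℝ, 0 < δ ∧ δ ≤ 1/2 ∧ ∀ t ∈ Icc (1-δ) (1+δ),
      (deriv (deriv φ) 1 - η)/2 * (t-1)^2 ≤ φ t ∧
      φ t ≤ (deriv (deriv φ) 1 + η)/2 * (t-1)^2 := by
  have hop : IsOpen (Ioi (0:ℝ)) := isOpen_Ioi
  have h1mem : (1:ℝ) ∈ Ioi (0:ℝ) := by norm_num
  have hd1 : ∀ x ∈ Ioi (0:ℝ), DifferentiableAt ℝ φ x := fun x hx =>
    (hφC2.differentiableOn (by norm_num)).differentiableAt (hop.mem_nhds hx)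
  have hC1 : ContDiffOn ℝ 1 (deriv φ) (Ioi (0:ℝ)) := hφC2.deriv_of_isOpen hop (by norm_num)
  have hd2 : ∀ x ∈ Ioi (0:ℝ), DifferentiableAt ℝ (deriv φ) x := fun x hx =>
    (hC1.differentiableOn one_ne_zero).differentiableAt (hop.mem_nhds hx)
  have hcont : ContinuousAt (deriv (deriv φ)) 1 :=
    (hC1.continuousOn_deriv_of_isOpen hop le_rfl).continuousAt (hop.mem_nhds h1mem)
  rw [Metric.continuousAt_iff] at hcont
  obtain ⟨δ₀, hδ₀, hball⟩ := hcont η hη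
  set κ := deriv (deriv φ) 1 with hκ
  set r := min δ₀ (3/4 : ℝ) with hr
  have hr0 : 0 < r := lt_min hδ₀ (by norm_num)
  have hr34 : r ≤ 3/4 := min_le_right _ _
  have hnear : ∀ x ∈ Ioo (1-r) (1+r), |deriv (deriv φ) x - κ| < η := by
    intro x hx
    have hdist : dist x 1 < δ₀ := by
      rw [Real.dist_eq]
      have : |x - 1| < r := abs_lt.2 ⟨by linarith [hx.1], by linarith [hx.2]⟩
      exact lt_of_lt_of_le this (min_le_left _ _)
    have := hball hdist
    rwa [Real.dist_eq] at this
  have hlow : ∀ t ∈ Ioo (1-r) (1+r), (κ - η)/2 * (t-1)^2 ≤ φ t := by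
    apply tangent_lb hr0 hr34 φ (deriv φ) (deriv (deriv φ))
      (fun x hx => (hd1 x hx).hasDerivAt) (fun x hx => (hd2 x hx).hasDerivAt) hφ1 hφ'1
    intro x hx
    linarith [(abs_lt.1 (hnear x hx)).1]
  have hupp : ∀ t ∈ Ioo (1-r) (1+r), φ t ≤ (κ + η)/2 * (t-1)^2 := by
    have hneg : ∀ t ∈ Ioo (1-r) (1+r), (-(κ+η))/2 * (t-1)^2 ≤ -φ t := by
      apply tangent_lb hr0 hr34 (fun t => -φ t) (fun x => -deriv φ x)
        (fun x => -deriv (deriv φ) x)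
        (fun x hx => ((hd1 x hx).hasDerivAt).neg) (fun x hx => ((hd2 x hx).hasDerivAt).neg)
        (by simp [hφ1]) (by simp [hφ'1])
      intro x hx
      linarith [(abs_lt.1 (hnear x hx)).2]
    intro t ht
    have h1 := hneg t ht
    nlinarith [sq_nonneg (t-1)]
  refine ⟨r/2, by linarith, by linarith, ?_⟩
  intro t ht
  have ht' : t ∈ Ioo (1-r) (1+r) :=
    ⟨by linarith [ht.1], by linarith [ht.2]⟩
  exact ⟨hlow t ht', hupp t ht'⟩

set_option maxHeartbeats 1000000 in
theorem stmt2 (n : ℕ) (hn : 2 ≤ n) (p f : Fin n → ℝ)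
    (hp1 : ∑ i, p i = 1) (hp : ∀ i, 0 < p i)
    (hf : ∃ i j, f i ≠ f j)
    (φ : ℝ → ℝ) (hφconv : StrictConvexOn ℝ (Set.Ici (0 : ℝ)) φ)
    (hφC2 : ContDiffOn ℝ 2 φ (Set.Ioi (0 : ℝ)))
    (hφ1 : φ 1 = 0) (hφ'1 : deriv φ 1 = 0) (hφ''1 : 0 < deriv (deriv φ) 1) :
    Tendsto (fun ε : ℝ =>
        (sSup ((fun q : Fin n → ℝ => ∑ i, q i * f i) ''
            {q : Fin n → ℝ | (∑ i, q i = 1 ∧ ∀ i, 0 ≤ q i) ∧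
              ∑ i, p i * φ (q i / p i) ≤ ε})
          - ∑ i, p i * f i) / Real.sqrt ε)
      (nhdsWithin 0 (Set.Ioi 0))
      (nhds (Real.sqrt (2 * (∑ i, p i * (f i - ∑ j, p j * f j) ^ 2)
          / deriv (deriv φ) 1))) := by
  haveI : Nonempty (Fin n) := Fin.pos_iff_nonempty.mp (by omega)
  set E : ℝ := ∑ i, p i * f i with hE
  set V : ℝ := ∑ i, p i * (f i - E) ^ 2 with hVdef
  set κ : ℝ := deriv (deriv φ) 1 with hκdef
  have hA : ∀ ε : ℝ, ((fun q : Fin n → ℝ => ∑ i, q i * f i) ''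
            {q : Fin n → ℝ | (∑ i, q i = 1 ∧ ∀ i, 0 ≤ q i) ∧
              ∑ i, p i * φ (q i / p i) ≤ ε}) =
        ((fun q : Fin n → ℝ => ∑ i, q i * f i) ''
            {q : Fin n → ℝ | (∑ i, q i = 1 ∧ ∀ i, 0 ≤ q i) ∧
              ∑ i, p i * φ (q i / p i) ≤ ε}) := fun _ => rfl
  set A : ℝ → Set ℝ := fun ε => ((fun q : Fin n → ℝ => ∑ i, q i * f i) ''
            {q : Fin n → ℝ | (∑ i, q i = 1 ∧ ∀ i, 0 ≤ q i) ∧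
              ∑ i, p i * φ (q i / p i) ≤ ε}) with hAdef
  -- basic positivity
  have hV : 0 < V := by
    rcases hf with ⟨i, j, hij⟩
    rcases lt_or_eq_of_le (Finset.sum_nonneg
      (fun k (_ : k ∈ Finset.univ) => mul_nonneg (hp k).le (sq_nonneg (f k - E)))) with h | h
    · exact h
    · exfalso
      have hall : ∀ k ∈ Finset.univ, p k * (f k - E) ^ 2 = 0 := by
        rw [← Finset.sum_eq_zero_iff_of_nonneg
          (fun k _ => mul_nonneg (hp k).le (sq_nonneg (f k - E)))]
        exact h.symm
      have hfk : ∀ k : Fin n, f k = E := by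
        intro k
        have h2 := hall k (Finset.mem_univ k)
        rcases mul_eq_zero.1 h2 with h1 | h1
        · exact absurd h1 (hp k).ne'
        · have := pow_eq_zero_iff (two_ne_zero) |>.1 h1
          linarith
      exact hij (by rw [hfk i, hfk j])
  have hsum0 : ∑ i, p i * (f i - E) = 0 := by
    have h1 : ∑ i, p i * (f i - E) = (∑ i, p i * f i) - E * ∑ i, p i := by
      rw [Finset.mul_sum, ← Finset.sum_sub_distrib]
      exact Finset.sum_congr rfl (fun i _ => by ring)
    rw [h1, hp1, ← hE]; ring
  have hsumV : ∑ i, p i * (f i - E) * (f i - E) = V := by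
    rw [hVdef]
    exact Finset.sum_congr rfl (fun i _ => by ring)
  -- E is always attained (by q = p)
  have hmemA : ∀ ε : ℝ, 0 ≤ ε → E ∈ A ε := by
    intro ε hε
    refine ⟨p, ⟨⟨hp1, fun i => (hp i).le⟩, ?_⟩, rfl⟩
    have hz : ∑ i : Fin n, p i * φ (p i / p i) = 0 := by
      apply Finset.sum_eq_zero
      intro i _
      rw [div_self (hp i).ne', hφ1, mul_zero]
    rw [hz]; exact hε
  have hne : (Finset.univ : Finset (Fin n)).Nonempty := Finset.univ_nonempty
  -- boundedness of A ε
  have hbdd : ∀ ε : ℝ, BddAbove (A ε) := by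
    intro ε
    refine ⟨Finset.univ.sup' hne f, ?_⟩
    rintro x ⟨q, ⟨⟨hqs, hq0⟩, -⟩, rfl⟩
    calc ∑ i, q i * f i ≤ ∑ i, q i * Finset.univ.sup' hne f :=
          Finset.sum_le_sum (fun i _ => mul_le_mul_of_nonneg_left
            (Finset.le_sup' f (Finset.mem_univ i)) (hq0 i))
      _ = Finset.univ.sup' hne f := by rw [← Finset.sum_mul, hqs, one_mul]
  rw [tendsto_order]
  constructor
  · -- lower bound branch
    intro c hc
    obtain ⟨η, hη0, hcη⟩ : ∃ η > 0, c < Real.sqrt (2 * V / (κ + η)) := by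
      rcases le_or_gt c 0 with hc0 | hc0
      · exact ⟨1, one_pos, lt_of_le_of_lt hc0 (Real.sqrt_pos.2 (by positivity))⟩
      · have hc2 : c ^ 2 < 2 * V / κ := (Real.lt_sqrt hc0.le).1 hc
        have hκc : κ < 2 * V / c ^ 2 := by
          rw [lt_div_iff₀ (by positivity)]
          rw [lt_div_iff₀ hφ''1] at hc2
          nlinarith
        refine ⟨(2 * V / c ^ 2 - κ) / 2, by linarith, (Real.lt_sqrt hc0.le).2 ?_⟩
        rw [lt_div_iff₀ (by linarith)]
        have h2 : κ + (2 * V / c ^ 2 - κ) / 2 < 2 * V / c ^ 2 := by linarith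
        calc c ^ 2 * (κ + (2 * V / c ^ 2 - κ) / 2) < c ^ 2 * (2 * V / c ^ 2) := by
              apply mul_lt_mul_of_pos_left h2 (by positivity)
          _ = 2 * V := by field_simp
    obtain ⟨δ, hδ0, hδhalf, hsand⟩ := sandwich φ hφC2 hφ1 hφ'1 hη0
    rw [← hκdef] at hsand
    set B : ℝ := Finset.univ.sup' hne (fun i => |f i - E|) with hB
    have hB0 : 0 ≤ B := le_trans (abs_nonneg (f (Classical.arbitrary (Fin n)) - E))
      (Finset.le_sup' (fun i => |f i - E|) (Finset.mem_univ _))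
    set D : ℝ := δ / (B + 1) with hD
    have hD0 : 0 < D := by positivity
    set ε₀ : ℝ := D ^ 2 * ((κ + η) * V / 2) with hε₀
    have hε₀0 : 0 < ε₀ := by positivity
    filter_upwards [Ioo_mem_nhdsGT_of_mem (Set.left_mem_Ico.2 hε₀0)] with ε hε
    have hε0 : 0 < ε := hε.1
    have hsqε : 0 < Real.sqrt ε := Real.sqrt_pos.2 hε0
    set t : ℝ := Real.sqrt (2 * ε / ((κ + η) * V)) with htdef
    have ht0 : 0 < t := Real.sqrt_pos.2 (by positivity)
    have ht2 : t ^ 2 = 2 * ε / ((κ + η) * V) := Real.sq_sqrt (by positivity)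
    have htD : t ≤ D := by
      rw [htdef, show D = Real.sqrt (D ^ 2) from (Real.sqrt_sq hD0.le).symm]
      apply Real.sqrt_le_sqrt
      rw [div_le_iff₀ (by positivity)]
      have hεle : ε ≤ ε₀ := hε.2.le
      nlinarith
    have habs : ∀ i : Fin n, |t * (f i - E)| ≤ δ := by
      intro i
      rw [abs_mul, abs_of_nonneg ht0.le]
      have hfB : |f i - E| ≤ B + 1 := by
        have : |f i - E| ≤ B := Finset.le_sup' (fun j => |f j - E|) (Finset.mem_univ i)
        linarith
      calc t * |f i - E| ≤ D * (B + 1) :=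
            mul_le_mul htD hfB (abs_nonneg _) hD0.le
        _ = δ := by rw [hD]; field_simp
    set q : Fin n → ℝ := fun i => p i * (1 + t * (f i - E)) with hq
    have hq0 : ∀ i, 0 ≤ q i := by
      intro i
      apply mul_nonneg (hp i).le
      have := (abs_le.1 (habs i)).1
      linarith
    have hqs : ∑ i, q i = 1 := by
      have h1 : ∀ i : Fin n, q i = p i + t * (p i * (f i - E)) := fun i => by
        show p i * (1 + t * (f i - E)) = _; ring
      rw [Finset.sum_congr rfl (fun i _ => h1 i), Finset.sum_add_distrib, hp1,
        ← Finset.mul_sum, hsum0, mul_zero, add_zero]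
    have hmemI : ∀ i : Fin n, 1 + t * (f i - E) ∈ Icc (1 - δ) (1 + δ) := by
      intro i
      have h1 := (abs_le.1 (habs i)).1
      have h2 := (abs_le.1 (habs i)).2
      exact ⟨by linarith, by linarith⟩
    have hqd : ∀ i : Fin n, q i / p i = 1 + t * (f i - E) := by
      intro i
      show p i * (1 + t * (f i - E)) / p i = _
      rw [mul_comm, mul_div_assoc, div_self (hp i).ne', mul_one]
    have hfeas : ∑ i, p i * φ (q i / p i) ≤ ε := by
      calc ∑ i, p i * φ (q i / p i)
          ≤ ∑ i, p i * ((κ + η) / 2 * (t * (f i - E)) ^ 2) := by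
            apply Finset.sum_le_sum
            intro i _
            apply mul_le_mul_of_nonneg_left _ (hp i).le
            rw [hqd i]
            have h3 := (hsand _ (hmemI i)).2
            have heq : (1 + t * (f i - E) - 1) = t * (f i - E) := by ring
            rwa [heq] at h3
        _ = ∑ i, (κ + η) / 2 * t ^ 2 * (p i * (f i - E) ^ 2) :=
              Finset.sum_congr rfl (fun i _ => by ring)
        _ = (κ + η) / 2 * t ^ 2 * V := by rw [← Finset.mul_sum, ← hVdef]
        _ = ε := by
            rw [ht2]
            have h4 : κ + η ≠ 0 := by positivity
            field_simp
    have hval : ∑ i, q i * f i = E + t * V := by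
      have h1 : ∀ i : Fin n, q i * f i
          = p i * f i + t * (p i * (f i - E) * (f i - E)) + (t * E) * (p i * (f i - E)) := by
        intro i
        show (p i * (1 + t * (f i - E))) * f i = _
        ring
      rw [Finset.sum_congr rfl (fun i _ => h1 i), Finset.sum_add_distrib,
        Finset.sum_add_distrib, ← Finset.mul_sum, ← Finset.mul_sum, hsum0, hsumV,
        mul_zero, add_zero, ← hE]
    have hmem2 : E + t * V ∈ A ε := ⟨q, ⟨⟨hqs, hq0⟩, hfeas⟩, hval⟩
    have hle : E + t * V ≤ sSup (A ε) := le_csSup (hbdd ε) hmem2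
    have htv : t * V / Real.sqrt ε = Real.sqrt (2 * V / (κ + η)) := by
      have h1 : Real.sqrt (2 * V / (κ + η)) = Real.sqrt (2 / ((κ + η) * V)) * V := by
        rw [show (2:ℝ) * V / (κ + η) = (2 / ((κ + η) * V)) * V ^ 2 by
          field_simp]
        rw [Real.sqrt_mul (by positivity), Real.sqrt_sq hV.le]
      rw [htdef, show 2 * ε / ((κ + η) * V) = ε * (2 / ((κ + η) * V)) by ring,
        Real.sqrt_mul hε0.le, h1]
      field_simp
    show c < (sSup (A ε) - E) / Real.sqrt ε
    have hfin : t * V / Real.sqrt ε ≤ (sSup (A ε) - E) / Real.sqrt ε := by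
      exact (div_le_div_iff_of_pos_right hsqε).2 (by linarith)
    calc c < Real.sqrt (2 * V / (κ + η)) := hcη
      _ = t * V / Real.sqrt ε := htv.symm
      _ ≤ _ := hfin
  · -- upper bound branch
    intro c hc
    have hc0 : 0 < c := lt_of_le_of_lt (Real.sqrt_nonneg _) hc
    have hsq : 2 * V / κ < c ^ 2 := (Real.sqrt_lt' hc0).1 hc
    have h2Vc : 2 * V / c ^ 2 < κ := by
      rw [div_lt_iff₀ (by positivity)]
      rw [div_lt_iff₀ hφ''1] at hsq
      nlinarith
    set η : ℝ := (κ - 2 * V / c ^ 2) / 2 with hηdef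
    have hVc2 : 0 < 2 * V / c ^ 2 := div_pos (by linarith) (pow_pos hc0 2)
    have hη0 : 0 < η := by rw [hηdef]; linarith
    have hκη : 0 < κ - η := by rw [hηdef]; linarith
    have hcC : Real.sqrt (2 * V / (κ - η)) < c := by
      apply (Real.sqrt_lt' hc0).2
      rw [div_lt_iff₀ hκη]
      have h5 : 2 * V / c ^ 2 < κ - η := by rw [hηdef]; linarith
      rw [div_lt_iff₀ (by positivity)] at h5
      nlinarith
    obtain ⟨δ, hδ0, hδhalf, hsand⟩ := sandwich φ hφC2 hφ1 hφ'1 hη0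
    rw [← hκdef] at hsand
    have hlow : ∀ s ∈ Icc (1 - δ) (1 + δ), (κ - η) / 2 * (s - 1) ^ 2 ≤ φ s :=
      fun s hs => (hsand s hs).1
    set m : ℝ := (κ - η) / 2 * δ ^ 2 with hm
    have hm0 : 0 < m := by positivity
    have hedge1 : m ≤ φ (1 - δ) := by
      have h1 := hlow (1 - δ) ⟨le_refl _, by linarith⟩
      have h2 : (1 - δ - 1) ^ 2 = δ ^ 2 := by ring
      rw [h2] at h1
      rw [hm]; exact h1
    have hedge2 : m ≤ φ (1 + δ) := by
      have h1 := hlow (1 + δ) ⟨by linarith, le_refl _⟩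
      have h2 : (1 + δ - 1) ^ 2 = δ ^ 2 := by ring
      rw [h2] at h1
      rw [hm]; exact h1
    have hout : ∀ s : ℝ, 0 ≤ s → s ∉ Ioo (1 - δ) (1 + δ) → m ≤ φ s := by
      intro s hs hnot
      rw [Set.mem_Ioo, not_and_or, not_lt, not_lt] at hnot
      rcases hnot with hle | hge
      · rcases eq_or_lt_of_le hle with heq | hlt
        · rw [heq]; exact hedge1
        · have h1s : 0 < 1 - s := by linarith
          set lam : ℝ := δ / (1 - s) with hlam
          have hlam0 : 0 < lam := by positivity
          have hlam1 : lam ≤ 1 := by rw [hlam, div_le_one h1s]; linarith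
          have hcomb := hφconv.convexOn.2 (show s ∈ Ici (0:ℝ) from hs)
            (show (1:ℝ) ∈ Ici (0:ℝ) by norm_num) hlam0.le (by linarith)
            (show lam + (1 - lam) = 1 by ring)
          have hpt : lam • s + (1 - lam) • (1:ℝ) = 1 - δ := by
            simp only [smul_eq_mul, hlam]
            field_simp
            ring
          rw [hpt] at hcomb
          simp only [smul_eq_mul, hφ1, mul_zero, add_zero] at hcomb
          -- hcomb : φ (1 - δ) ≤ lam * φ s
          nlinarith [hedge1]
      · rcases eq_or_lt_of_le hge with heq | hlt
        · rw [← heq]; exact hedge2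
        · have hs1 : 0 < s - 1 := by linarith
          set lam : ℝ := δ / (s - 1) with hlam
          have hlam0 : 0 < lam := by positivity
          have hlam1 : lam ≤ 1 := by rw [hlam, div_le_one hs1]; linarith
          have hcomb := hφconv.convexOn.2 (show s ∈ Ici (0:ℝ) from hs)
            (show (1:ℝ) ∈ Ici (0:ℝ) by norm_num) hlam0.le (by linarith)
            (show lam + (1 - lam) = 1 by ring)
          have hpt : lam • s + (1 - lam) • (1:ℝ) = 1 + δ := by
            simp only [smul_eq_mul, hlam]
            field_simp
            ring
          rw [hpt] at hcomb
          simp only [smul_eq_mul, hφ1, mul_zero, add_zero] at hcomb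
          nlinarith [hedge2]
    have hφnn : ∀ s : ℝ, 0 ≤ s → 0 ≤ φ s := by
      intro s hs
      by_cases hin : s ∈ Ioo (1 - δ) (1 + δ)
      · have h1 := hlow s ⟨hin.1.le, hin.2.le⟩
        nlinarith [sq_nonneg (s - 1)]
      · linarith [hout s hs hin]
    set pm : ℝ := Finset.univ.inf' hne p with hpm
    have hpm0 : 0 < pm := by
      rw [hpm]
      exact (Finset.lt_inf'_iff hne).2 (fun i _ => hp i)
    have hpmle : ∀ i : Fin n, pm ≤ p i := fun i => by
      rw [hpm]; exact Finset.inf'_le _ (Finset.mem_univ i)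
    have hε₀0 : 0 < pm * m := by positivity
    filter_upwards [Ioo_mem_nhdsGT_of_mem (Set.left_mem_Ico.2 hε₀0)] with ε hε
    have hε0 : 0 < ε := hε.1
    have hsqε : 0 < Real.sqrt ε := Real.sqrt_pos.2 hε0
    set C : ℝ := Real.sqrt (2 * V / (κ - η)) with hCdef
    have hub : ∀ x ∈ A ε, x ≤ E + Real.sqrt ε * C := by
      rintro x ⟨q, ⟨⟨hqs, hq0⟩, hqφ⟩, rfl⟩
      have hw0 : ∀ i : Fin n, 0 ≤ q i / p i := fun i => div_nonneg (hq0 i) (hp i).le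
      have hterm_nn : ∀ j : Fin n, 0 ≤ p j * φ (q j / p j) :=
        fun j => mul_nonneg (hp j).le (hφnn _ (hw0 j))
      have hwin : ∀ i : Fin n, q i / p i ∈ Icc (1 - δ) (1 + δ) := by
        intro i
        by_contra hnin
        have hoIoo : q i / p i ∉ Ioo (1 - δ) (1 + δ) := fun h => hnin ⟨h.1.le, h.2.le⟩
        have h1 : m ≤ φ (q i / p i) := hout _ (hw0 i) hoIoo
        have h2 : pm * m ≤ p i * φ (q i / p i) :=
          mul_le_mul (hpmle i) h1 hm0.le (hp i).le
        have h3 : p i * φ (q i / p i) ≤ ∑ j, p j * φ (q j / p j) :=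
          Finset.single_le_sum (fun j _ => hterm_nn j) (Finset.mem_univ i)
        have h4 : pm * m ≤ ε := le_trans h2 (le_trans h3 hqφ)
        linarith [hε.2]
      have hchi : ∑ i, p i * (q i / p i - 1) ^ 2 ≤ 2 * ε / (κ - η) := by
        have h2 : (κ - η) / 2 * ∑ i, p i * (q i / p i - 1) ^ 2 ≤ ε := by
          calc (κ - η) / 2 * ∑ i, p i * (q i / p i - 1) ^ 2
              = ∑ i, p i * ((κ - η) / 2 * (q i / p i - 1) ^ 2) := by
                rw [Finset.mul_sum]; exact Finset.sum_congr rfl (fun i _ => by ring)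
            _ ≤ ∑ i, p i * φ (q i / p i) := Finset.sum_le_sum (fun i _ =>
                mul_le_mul_of_nonneg_left (hlow _ (hwin i)) (hp i).le)
            _ ≤ ε := hqφ
        rw [le_div_iff₀ hκη]
        nlinarith [h2]
      have hvalrep : ∑ i, q i * f i - E = ∑ i, (p i * (q i / p i - 1)) * (f i - E) := by
        have h1 : ∀ i : Fin n, (p i * (q i / p i - 1)) * (f i - E)
            = q i * f i - p i * f i - E * q i + E * p i := by
          intro i
          have hqi : p i * (q i / p i) = q i := by
            rw [mul_comm, div_mul_cancel₀ _ (hp i).ne']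
          calc (p i * (q i / p i - 1)) * (f i - E)
              = (p i * (q i / p i)) * f i - p i * f i
                - E * (p i * (q i / p i)) + E * p i := by ring
            _ = q i * f i - p i * f i - E * q i + E * p i := by rw [hqi]
        rw [Finset.sum_congr rfl (fun i _ => h1 i)]
        rw [Finset.sum_add_distrib, Finset.sum_sub_distrib, Finset.sum_sub_distrib,
          ← Finset.mul_sum, ← Finset.mul_sum, hqs, hp1, ← hE]
        ring
      have hCS : (∑ i, (p i * (q i / p i - 1)) * (f i - E)) ^ 2 ≤ (2 * ε / (κ - η)) * V := by
        have h1 := Finset.sum_mul_sq_le_sq_mul_sq Finset.univ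
          (fun i => Real.sqrt (p i) * (q i / p i - 1))
          (fun i => Real.sqrt (p i) * (f i - E))
        have e1 : ∀ i ∈ Finset.univ, (Real.sqrt (p i) * (q i / p i - 1))
            * (Real.sqrt (p i) * (f i - E)) = (p i * (q i / p i - 1)) * (f i - E) := by
          intro i _
          have hss : Real.sqrt (p i) * Real.sqrt (p i) = p i := Real.mul_self_sqrt (hp i).le
          calc (Real.sqrt (p i) * (q i / p i - 1)) * (Real.sqrt (p i) * (f i - E))
              = (Real.sqrt (p i) * Real.sqrt (p i)) * (q i / p i - 1) * (f i - E) := by ring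
            _ = (p i * (q i / p i - 1)) * (f i - E) := by rw [hss]
        have e2 : ∀ i ∈ Finset.univ, (Real.sqrt (p i) * (q i / p i - 1)) ^ 2
            = p i * (q i / p i - 1) ^ 2 := by
          intro i _; rw [mul_pow, Real.sq_sqrt (hp i).le]
        have e3 : ∀ i ∈ Finset.univ, (Real.sqrt (p i) * (f i - E)) ^ 2
            = p i * (f i - E) ^ 2 := by
          intro i _; rw [mul_pow, Real.sq_sqrt (hp i).le]
        rw [Finset.sum_congr rfl e1, Finset.sum_congr rfl e2, Finset.sum_congr rfl e3,
          ← hVdef] at h1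
        calc (∑ i, (p i * (q i / p i - 1)) * (f i - E)) ^ 2
            ≤ (∑ i, p i * (q i / p i - 1) ^ 2) * V := h1
          _ ≤ (2 * ε / (κ - η)) * V := mul_le_mul_of_nonneg_right hchi hV.le
      have hxb : ∑ i, q i * f i - E ≤ Real.sqrt ε * C := by
        have h1 : ∑ i, (p i * (q i / p i - 1)) * (f i - E)
            ≤ Real.sqrt ((2 * ε / (κ - η)) * V) := by
          calc ∑ i, (p i * (q i / p i - 1)) * (f i - E)
              ≤ |∑ i, (p i * (q i / p i - 1)) * (f i - E)| := le_abs_self _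
            _ = Real.sqrt ((∑ i, (p i * (q i / p i - 1)) * (f i - E)) ^ 2) :=
                (Real.sqrt_sq_eq_abs _).symm
            _ ≤ Real.sqrt ((2 * ε / (κ - η)) * V) := Real.sqrt_le_sqrt hCS
        have h2 : Real.sqrt ((2 * ε / (κ - η)) * V) = Real.sqrt ε * C := by
          rw [hCdef, show (2 * ε / (κ - η)) * V = ε * (2 * V / (κ - η)) by ring,
            Real.sqrt_mul hε0.le]
        rw [hvalrep, ← h2]
        exact h1
      linarith [hxb]
    have hsup : sSup (A ε) ≤ E + Real.sqrt ε * C := csSup_le ⟨E, hmemA ε hε0.le⟩ hub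
    show (sSup (A ε) - E) / Real.sqrt ε < c
    have h6 : (sSup (A ε) - E) / Real.sqrt ε ≤ C := by
      rw [div_le_iff₀ hsqε, mul_comm]
      linarith
    exact lt_of_le_of_lt h6 hcC
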